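/- arXiv:2209.13842 — 4 statements merged into one kernel-verified Lean document; each statement's English description precedes it below -/
import Mathlib

section
/- Suppose g : [0, R] → ℝ is C², g(0) = 0, g'(R) = 0, g > 0 on (0, R], g' > 0 on [0, R), and g satisfies g'' + H·g' + (μ + H')·g = 0 on (0, R), where H(r) = (m-1)·cot r − (k-1)·tan r, with R < π/4, m ≥ 2, k ≥ 1, k ≤ m, and μ ≥ 2(m+k). Then g'(r) − 2·cot(2r)·g(r) ≤ 0 for all r ∈ (0, R). -/
open Real Set

/-- Compact monotonicity lemma (Lemma 4.2): with
`H(r) = (m-1)·cot r − (k-1)·tan r`, `R < π/4`, `μ ≥ 2(m+k)`, the radial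
eigenfunction `g` satisfies `g'(r) − 2·cot(2r)·g(r) ≤ 0` on `(0, R)`. -/
theorem monotonicity_compact (m k : ℕ) (hm : 2 ≤ m) (hk : 1 ≤ k) (hkm : k ≤ m)
    (R μ : ℝ) (hR : 0 < R) (hR4 : R < π / 4) (hμ : 2 * ((m : ℝ) + k) ≤ μ)
    (g : ℝ → ℝ) (hg : ContDiffOn ℝ 2 g (Icc 0 R))
    (hg0 : g 0 = 0) (hgR : deriv g R = 0)
    (hgpos : ∀ r ∈ Ioc 0 R, 0 < g r)
    (hg'pos : ∀ r ∈ Ico 0 R, 0 < deriv g r)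
    (hODE : ∀ r ∈ Ioo 0 R,
      deriv (deriv g) r
        + (((m : ℝ) - 1) * (Real.cos r / Real.sin r)
            - ((k : ℝ) - 1) * (Real.sin r / Real.cos r)) * deriv g r
        + (μ + deriv (fun t : ℝ => ((m : ℝ) - 1) * (Real.cos t / Real.sin t)
            - ((k : ℝ) - 1) * (Real.sin t / Real.cos t)) r) * g r = 0) :
    ∀ r ∈ Ioo 0 R,
      deriv g r - 2 * (Real.cos (2 * r) / Real.sin (2 * r)) * g r ≤ 0 := by
  obtain ⟨n, rfl⟩ := Nat.exists_eq_add_of_le hm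
  obtain ⟨j, rfl⟩ := Nat.exists_eq_add_of_le hk
  have hpi : (0:ℝ) < π := pi_pos
  have hRlt : R < π / 2 := by linarith
  set h : ℝ → ℝ := derivWithin g (Icc 0 R) with hhdef
  have hcos_pos : ∀ x ∈ Icc (0:ℝ) R, 0 < Real.cos x := by
    intro x hx
    exact Real.cos_pos_of_mem_Ioo ⟨by linarith [hx.1], by linarith [hx.2]⟩
  have hsin_pos : ∀ x ∈ Ioo (0:ℝ) R, 0 < Real.sin x := by
    intro x hx
    exact Real.sin_pos_of_pos_of_lt_pi hx.1 (by linarith [hx.2])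
  have hheq : ∀ x ∈ Ioo (0:ℝ) R, h x = deriv g x := by
    intro x hx
    exact derivWithin_of_mem_nhds (Icc_mem_nhds hx.1 hx.2)
  have hgC : ContinuousOn g (Icc 0 R) := hg.continuousOn
  have hhC : ContinuousOn h (Icc 0 R) :=
    hg.continuousOn_derivWithin (uniqueDiffOn_Icc hR) (by norm_num)
  set F : ℝ → ℝ := fun t => Real.sin t ^ (n+1) * Real.cos t ^ (j+1) *
      (Real.sin t * h t - Real.cos (2*t) * g t / Real.cos t) with hFdef
  have hFC : ContinuousOn F (Icc 0 R) := by
    apply ContinuousOn.mul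
    · exact (Real.continuous_sin.continuousOn.pow _).mul (Real.continuous_cos.continuousOn.pow _)
    · apply ContinuousOn.sub
      · exact Real.continuous_sin.continuousOn.mul hhC
      · apply ContinuousOn.div
        · exact ((Real.continuous_cos.comp (continuous_const.mul continuous_id)).continuousOn).mul hgC
        · exact Real.continuous_cos.continuousOn
        · exact fun x hx => (hcos_pos x hx).ne'
  have hg2 : ContDiffOn ℝ 2 g (Ioo 0 R) := hg.mono Ioo_subset_Icc_self
  have hdg : ContDiffOn ℝ 1 (deriv g) (Ioo 0 R) :=
    hg2.deriv_of_isOpen isOpen_Ioo (by norm_num)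
  have key : ∀ x ∈ Ioo (0:ℝ) R, HasDerivAt F
      (Real.sin x ^ (n+1) * Real.sin x * Real.cos x ^ (j+1) *
        ((2 * (((2+n:ℕ):ℝ) + ((1+j:ℕ):ℝ)) - μ) * g x)) x := by
    intro x hx
    have hs : 0 < Real.sin x := hsin_pos x hx
    have hc : 0 < Real.cos x := hcos_pos x (Ioo_subset_Icc_self hx)
    have hxm : Ioo (0:ℝ) R ∈ nhds x := isOpen_Ioo.mem_nhds hx
    have hgdiff : DifferentiableAt ℝ g x :=
      ((hg2.differentiableOn (by norm_num)) x hx).differentiableAt hxm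
    have hgd : HasDerivAt g (deriv g x) x := hgdiff.hasDerivAt
    have hdgd : HasDerivAt (deriv g) (deriv (deriv g) x) x :=
      (((hdg.differentiableOn (by norm_num)) x hx).differentiableAt hxm).hasDerivAt
    have hEv : h =ᶠ[nhds x] deriv g := by
      filter_upwards [hxm] with y hy
      exact hheq y hy
    have hhd : HasDerivAt h (deriv (deriv g) x) x := hdgd.congr_of_eventuallyEq hEv
    -- derivative of the coefficient function
    have hct : HasDerivAt (fun t => Real.cos t / Real.sin t)
        ((-Real.sin x * Real.sin x - Real.cos x * Real.cos x) / Real.sin x ^ 2) x :=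
      (Real.hasDerivAt_cos x).div (Real.hasDerivAt_sin x) hs.ne'
    have htn : HasDerivAt (fun t => Real.sin t / Real.cos t)
        ((Real.cos x * Real.cos x - Real.sin x * (-Real.sin x)) / Real.cos x ^ 2) x :=
      (Real.hasDerivAt_sin x).div (Real.hasDerivAt_cos x) hc.ne'
    have hHd : HasDerivAt (fun t : ℝ => (((2+n:ℕ):ℝ) - 1) * (Real.cos t / Real.sin t)
        - (((1+j:ℕ):ℝ) - 1) * (Real.sin t / Real.cos t))
        ((((2+n:ℕ):ℝ) - 1) * ((-Real.sin x * Real.sin x - Real.cos x * Real.cos x) / Real.sin x ^ 2)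
          - (((1+j:ℕ):ℝ) - 1) * ((Real.cos x * Real.cos x - Real.sin x * (-Real.sin x)) / Real.cos x ^ 2)) x :=
      (hct.const_mul _).sub (htn.const_mul _)
    have hODEx := hODE x hx
    rw [hHd.deriv] at hODEx
    -- build HasDerivAt F
    have H1 : HasDerivAt (fun t => Real.sin t ^ (n+1))
        (((n:ℝ)+1) * Real.sin x ^ n * Real.cos x) x := by
      have := (Real.hasDerivAt_sin x).fun_pow (n+1)
      simpa using this
    have H2 : HasDerivAt (fun t => Real.cos t ^ (j+1))
        (((j:ℝ)+1) * Real.cos x ^ j * (-Real.sin x)) x := by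
      have := (Real.hasDerivAt_cos x).fun_pow (j+1)
      simpa using this
    have H3 : HasDerivAt (fun t => Real.sin t * h t)
        (Real.cos x * h x + Real.sin x * deriv (deriv g) x) x :=
      (Real.hasDerivAt_sin x).mul hhd
    have H4 : HasDerivAt (fun t => Real.cos (2*t)) (-Real.sin (2*x) * 2) x := by
      have := (Real.hasDerivAt_cos (2*x)).comp x ((hasDerivAt_id x).const_mul 2)
      simpa [Function.comp_def] using this
    have H5 : HasDerivAt (fun t => Real.cos (2*t) * g t)
        (-Real.sin (2*x) * 2 * g x + Real.cos (2*x) * deriv g x) x := H4.mul hgd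
    have H6 : HasDerivAt (fun t => Real.cos (2*t) * g t / Real.cos t)
        (((-Real.sin (2*x) * 2 * g x + Real.cos (2*x) * deriv g x) * Real.cos x
          - Real.cos (2*x) * g x * (-Real.sin x)) / Real.cos x ^ 2) x := H5.div (Real.hasDerivAt_cos x) hc.ne'
    have H7 := H3.sub H6
    have H8 := (H1.mul H2).mul H7
    refine H8.congr_deriv ?_
    simp only [Pi.mul_apply, Pi.sub_apply]
    -- the scalar identity
    have pyth : Real.sin x ^ 2 + Real.cos x ^ 2 = 1 := Real.sin_sq_add_cos_sq x
    have hc2 : Real.cos (2*x) = Real.cos x ^ 2 - Real.sin x ^ 2 := Real.cos_two_mul' x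
    have hs2 : Real.sin (2*x) = 2 * Real.sin x * Real.cos x := Real.sin_two_mul x
    have hhx : h x = deriv g x := hheq x hx
    have hG2 : deriv (deriv g) x =
        -(((((2+n:ℕ):ℝ) - 1) * (Real.cos x / Real.sin x)
            - (((1+j:ℕ):ℝ) - 1) * (Real.sin x / Real.cos x)) * deriv g x)
          - (μ + ((((2+n:ℕ):ℝ) - 1) * ((-Real.sin x * Real.sin x - Real.cos x * Real.cos x) / Real.sin x ^ 2)
            - (((1+j:ℕ):ℝ) - 1) * ((Real.cos x * Real.cos x - Real.sin x * (-Real.sin x)) / Real.cos x ^ 2))) * g x := by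
      linarith
    rw [hhx, hG2, hc2, hs2]
    push_cast
    field_simp
    ring
  have hanti : AntitoneOn F (Icc 0 R) := by
    apply antitoneOn_of_deriv_nonpos (convex_Icc 0 R) hFC
    · intro x hx
      rw [interior_Icc] at hx
      exact ((key x hx).differentiableAt).differentiableWithinAt
    · intro x hx
      rw [interior_Icc] at hx
      rw [(key x hx).deriv]
      have hs : 0 < Real.sin x := hsin_pos x hx
      have hc : 0 < Real.cos x := hcos_pos x (Ioo_subset_Icc_self hx)
      have hgx : 0 < g x := hgpos x ⟨hx.1, hx.2.le⟩
      have hμ' : 2 * (((2+n:ℕ):ℝ) + ((1+j:ℕ):ℝ)) - μ ≤ 0 := by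
        push_cast at hμ ⊢; linarith
      have hP : 0 < Real.sin x ^ (n+1) * Real.sin x * Real.cos x ^ (j+1) := by positivity
      nlinarith [mul_pos hP hgx]
  have hF0 : F 0 = 0 := by simp [hFdef]
  intro r hr
  have hFr : F r ≤ 0 := by
    have := hanti (left_mem_Icc.mpr hR.le) (Ioo_subset_Icc_self hr) hr.1.le
    rwa [hF0] at this
  have hs : 0 < Real.sin r := hsin_pos r hr
  have hc : 0 < Real.cos r := hcos_pos r (Ioo_subset_Icc_self hr)
  have hbr : Real.sin r * h r - Real.cos (2*r) * g r / Real.cos r ≤ 0 := by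
    by_contra h'
    push_neg at h'
    have hP : 0 < Real.sin r ^ (n+1) * Real.cos r ^ (j+1) := by positivity
    simp only [hFdef] at hFr
    nlinarith [mul_pos hP h']
  have h2 : Real.sin r * h r * Real.cos r ≤ Real.cos (2*r) * g r := by
    have h3 : Real.sin r * h r ≤ Real.cos (2*r) * g r / Real.cos r := by linarith
    calc Real.sin r * h r * Real.cos r ≤ (Real.cos (2*r) * g r / Real.cos r) * Real.cos r :=
          mul_le_mul_of_nonneg_right h3 hc.le
      _ = Real.cos (2*r) * g r := by field_simp
  rw [← hheq r hr]
  have hs2 : Real.sin (2*r) = 2 * Real.sin r * Real.cos r := Real.sin_two_mul r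
  rw [hs2, sub_nonpos]
  have hsc : 0 < Real.sin r * Real.cos r := mul_pos hs hc
  rw [show 2 * (Real.cos (2*r) / (2 * Real.sin r * Real.cos r)) * g r
      = Real.cos (2*r) * g r / (Real.sin r * Real.cos r) by field_simp]
  rw [le_div_iff₀ hsc]
  nlinarith [h2]
end

section
/- Suppose g : [0, R] → ℝ is C², g(0) = 0, g'(R) = 0, g > 0 on (0, R], g' > 0 on [0, R), and g satisfies g'' + H·g' + (μ + H')·g = 0 on (0, R), where H(r) = (m-1)·coth r + (k-1)·tanh r, with m ≥ 2, 1 ≤ k ≤ m, and μ > 0. Then g'(r) − coth(r)·g(r) ≤ 0 for all r ∈ (0, R); equivalently, g(r)/sinh r is nonincreasing on (0, R). -/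
open Real Set

/-- Noncompact monotonicity lemma (Lemma 5.1): with
`H(r) = (m-1)·coth r + (k-1)·tanh r` and `μ > 0`, the radial eigenfunction `g`
satisfies `g'(r) − coth(r)·g(r) ≤ 0` on `(0, R)`, i.e. `g(r)/sinh r` is
nonincreasing on `(0, R)`. -/
theorem monotonicity_noncompact (m k : ℕ) (hm : 2 ≤ m) (hk : 1 ≤ k) (hkm : k ≤ m)
    (R μ : ℝ) (hR : 0 < R) (hμ : 0 < μ)
    (g : ℝ → ℝ) (hg : ContDiffOn ℝ 2 g (Icc 0 R))
    (hg0 : g 0 = 0) (hgR : deriv g R = 0)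
    (hgpos : ∀ r ∈ Ioc 0 R, 0 < g r)
    (hg'pos : ∀ r ∈ Ico 0 R, 0 < deriv g r)
    (hODE : ∀ r ∈ Ioo 0 R,
      deriv (deriv g) r
        + (((m : ℝ) - 1) * (Real.cosh r / Real.sinh r)
            + ((k : ℝ) - 1) * (Real.sinh r / Real.cosh r)) * deriv g r
        + (μ + deriv (fun t : ℝ => ((m : ℝ) - 1) * (Real.cosh t / Real.sinh t)
            + ((k : ℝ) - 1) * (Real.sinh t / Real.cosh t)) r) * g r = 0) :
    (∀ r ∈ Ioo 0 R, deriv g r - (Real.cosh r / Real.sinh r) * g r ≤ 0) ∧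
      AntitoneOn (fun r => g r / Real.sinh r) (Ioo 0 R) := by
  have hm' : (2:ℝ) ≤ (m:ℝ) := by exact_mod_cast hm
  have hk' : (1:ℝ) ≤ (k:ℝ) := by exact_mod_cast hk
  set W : ℝ → ℝ := fun r => Real.sinh r * derivWithin g (Icc 0 R) r - Real.cosh r * g r
    with hWdef
  have hud : UniqueDiffOn ℝ (Icc (0:ℝ) R) := uniqueDiffOn_Icc hR
  have hWcont : ContinuousOn W (Icc 0 R) := by
    apply ContinuousOn.sub
    · exact Real.continuous_sinh.continuousOn.mul
        (hg.continuousOn_derivWithin hud (by norm_num))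
    · exact Real.continuous_cosh.continuousOn.mul hg.continuousOn
  have hW0 : W 0 = 0 := by simp [hWdef, hg0]
  have hdw : ∀ r ∈ Ioo 0 R, derivWithin g (Icc 0 R) r = deriv g r := fun r hr =>
    derivWithin_of_mem_nhds (Icc_mem_nhds hr.1 hr.2)
  have hgIoo : ContDiffOn ℝ 2 g (Ioo 0 R) := hg.mono Ioo_subset_Icc_self
  have hg1 : ContDiffOn ℝ 1 (deriv g) (Ioo 0 R) :=
    hgIoo.deriv_of_isOpen isOpen_Ioo (by norm_num)
  have hgd : ∀ r ∈ Ioo 0 R, HasDerivAt g (deriv g r) r := by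
    intro r hr
    exact (((hgIoo.differentiableOn (by norm_num)).differentiableAt
      (isOpen_Ioo.mem_nhds hr))).hasDerivAt
  have hHasW : ∀ r ∈ Ioo 0 R,
      HasDerivAt W (Real.sinh r * (deriv (deriv g) r - g r)) r := by
    intro r hr
    have h1 : HasDerivAt g (deriv g r) r := hgd r hr
    have h2 : HasDerivAt (deriv g) (deriv (deriv g) r) r :=
      ((hg1.differentiableOn (by norm_num)).differentiableAt (isOpen_Ioo.mem_nhds hr)).hasDerivAt
    have h3 : HasDerivAt (fun r => Real.sinh r * deriv g r - Real.cosh r * g r)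
        ((Real.cosh r * deriv g r + Real.sinh r * deriv (deriv g) r)
          - (Real.sinh r * g r + Real.cosh r * deriv g r)) r :=
      ((Real.hasDerivAt_sinh r).mul h2).sub ((Real.hasDerivAt_cosh r).mul h1)
    have heq : W =ᶠ[nhds r] fun r => Real.sinh r * deriv g r - Real.cosh r * g r := by
      filter_upwards [isOpen_Ioo.mem_nhds hr] with x hx
      simp [hWdef, hdw x hx]
    have h4 := h3.congr_of_eventuallyEq heq
    refine h4.congr_deriv ?_
    ring
  -- the key sign information: wherever W ≥ 0, the derivative of W is negative
  have key : ∀ r ∈ Ioo 0 R, 0 ≤ W r → Real.sinh r * (deriv (deriv g) r - g r) < 0 := by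
    intro r hr hw
    have hs : 0 < Real.sinh r := Real.sinh_pos_iff.2 hr.1
    have hc : 0 < Real.cosh r := Real.cosh_pos r
    have hc1 : Real.cosh r ^ 2 - Real.sinh r ^ 2 = 1 := by
      rw [Real.cosh_sq]; ring
    have ha : 0 < g r := hgpos r ⟨hr.1, hr.2.le⟩
    have hb : 0 < deriv g r := hg'pos r ⟨hr.1.le, hr.2⟩
    -- derivative of the mean curvature function
    have hco : HasDerivAt (fun t => Real.cosh t / Real.sinh t)
        (-(1 / Real.sinh r ^ 2)) r := by
      have h := (Real.hasDerivAt_cosh r).div (Real.hasDerivAt_sinh r) hs.ne'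
      refine h.congr_deriv ?_
      rw [← hc1]; ring
    have hta : HasDerivAt (fun t => Real.sinh t / Real.cosh t)
        (1 / Real.cosh r ^ 2) r := by
      have h := (Real.hasDerivAt_sinh r).div (Real.hasDerivAt_cosh r) hc.ne'
      refine h.congr_deriv ?_
      rw [← hc1]; ring
    have hHder : HasDerivAt (fun t : ℝ => ((m : ℝ) - 1) * (Real.cosh t / Real.sinh t)
          + ((k : ℝ) - 1) * (Real.sinh t / Real.cosh t))
        (((m:ℝ)-1) * (-(1 / Real.sinh r ^ 2)) + ((k:ℝ)-1) * (1 / Real.cosh r ^ 2)) r :=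
      (hco.const_mul _).add (hta.const_mul _)
    have hH' : deriv (fun t : ℝ => ((m : ℝ) - 1) * (Real.cosh t / Real.sinh t)
          + ((k : ℝ) - 1) * (Real.sinh t / Real.cosh t)) r
        = ((m:ℝ)-1) * (-(1 / Real.sinh r ^ 2)) + ((k:ℝ)-1) * (1 / Real.cosh r ^ 2) :=
      hHder.deriv
    have hode := hODE r hr
    rw [hH'] at hode
    set s := Real.sinh r
    set c := Real.cosh r
    set a := g r
    set b := deriv g r
    set Y : ℝ := μ + (((m:ℝ)-1) * (-(1 / s ^ 2)) + ((k:ℝ)-1) * (1 / c ^ 2)) with hY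
    set X : ℝ := ((m : ℝ) - 1) * (c / s) + ((k : ℝ) - 1) * (s / c) with hX
    -- from the ODE: g'' = -X b - Y a
    have hgg : deriv (deriv g) r = -(X * b) - Y * a := by linarith
    have hw' : c * a ≤ s * b := by
      have : 0 ≤ s * b - c * a := by
        have := hw
        rw [hWdef] at this
        simpa [hdw r hr] using this
      linarith
    have hXpos : 0 ≤ X := by
      apply add_nonneg
      · exact mul_nonneg (by linarith) (div_nonneg hc.le hs.le)
      · exact mul_nonneg (by linarith) (div_nonneg hs.le hc.le)
    have hE : 0 < X * c + (Y + 1) * s := by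
      have hEeq : X * c + (Y + 1) * s
          = ((m:ℝ)-1) * s + ((k:ℝ)-1) * s + ((k:ℝ)-1) * (s / c ^ 2) + (μ + 1) * s := by
        rw [hX, hY]
        rw [← sub_eq_zero]
        have hcs : c ^ 2 - s ^ 2 - 1 = 0 := by linarith
        calc _ = ((m:ℝ)-1) * (c^2 - s^2 - 1) / s := by field_simp; ring
          _ = 0 := by rw [hcs]; simp
      rw [hEeq]
      have h1 : 0 ≤ ((m:ℝ)-1) * s := mul_nonneg (by linarith) hs.le
      have h2 : 0 ≤ ((k:ℝ)-1) * s := mul_nonneg (by linarith) hs.le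
      have h3 : 0 ≤ ((k:ℝ)-1) * (s / c ^ 2) :=
        mul_nonneg (by linarith) (div_nonneg hs.le (by positivity))
      have h4 : 0 < (μ + 1) * s := mul_pos (by linarith) hs
      linarith
    rw [hgg]
    nlinarith [mul_nonneg hXpos (sub_nonneg.2 hw'), mul_pos hE ha]
  -- main claim: W ≤ 0 on (0, R)
  have main : ∀ r₀ ∈ Ioo 0 R, W r₀ ≤ 0 := by
    intro r₀ hr₀
    by_contra hposW
    push_neg at hposW
    set S := {r : ℝ | r ∈ Icc (0:ℝ) r₀ ∧ W r ≤ 0} with hSdef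
    have hS0 : (0:ℝ) ∈ S := ⟨⟨le_refl 0, hr₀.1.le⟩, hW0.le⟩
    have hSbdd : BddAbove S := ⟨r₀, fun x hx => hx.1.2⟩
    have hSclosed : IsClosed S := by
      have hset : S = Icc 0 r₀ ∩ W ⁻¹' (Iic 0) := by
        ext x; simp [hSdef]
      rw [hset]
      exact ContinuousOn.preimage_isClosed_of_isClosed
        (hWcont.mono (Icc_subset_Icc le_rfl hr₀.2.le)) isClosed_Icc isClosed_Iic
    have hsmem : sSup S ∈ S := hSclosed.csSup_mem ⟨0, hS0⟩ hSbdd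
    set s₀ := sSup S
    have hs₀0 : 0 ≤ s₀ := hsmem.1.1
    have hs₀le : s₀ ≤ r₀ := hsmem.1.2
    have hWs₀ : W s₀ ≤ 0 := hsmem.2
    have hs₀lt : s₀ < r₀ := by
      rcases lt_or_eq_of_le hs₀le with h | h
      · exact h
      · rw [h] at hWs₀; linarith
    have hposI : ∀ r ∈ Ioc s₀ r₀, 0 < W r := by
      intro r hr
      by_contra hle
      push_neg at hle
      have hrS : r ∈ S := ⟨⟨hs₀0.trans hr.1.le, hr.2⟩, hle⟩
      exact absurd (le_csSup hSbdd hrS) (not_le.2 hr.1)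
    have hanti : StrictAntiOn W (Icc s₀ r₀) := by
      apply strictAntiOn_of_deriv_neg (convex_Icc _ _)
        (hWcont.mono (Icc_subset_Icc hs₀0 hr₀.2.le))
      intro r hr
      rw [interior_Icc] at hr
      have hrIoo : r ∈ Ioo 0 R := ⟨lt_of_le_of_lt hs₀0 hr.1, hr.2.trans hr₀.2⟩
      rw [(hHasW r hrIoo).deriv]
      exact key r hrIoo (hposI r ⟨hr.1, hr.2.le⟩).le
    have hfin := hanti (left_mem_Icc.2 hs₀lt.le) (right_mem_Icc.2 hs₀lt.le) hs₀lt
    linarith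
  have part1 : ∀ r ∈ Ioo 0 R, deriv g r - (Real.cosh r / Real.sinh r) * g r ≤ 0 := by
    intro r hr
    have hs : 0 < Real.sinh r := Real.sinh_pos_iff.2 hr.1
    have hWr := main r hr
    rw [hWdef] at hWr
    simp only [hdw r hr] at hWr
    have heq : deriv g r - Real.cosh r / Real.sinh r * g r
        = (Real.sinh r * deriv g r - Real.cosh r * g r) / Real.sinh r := by
      field_simp
    rw [heq]
    exact div_nonpos_of_nonpos_of_nonneg hWr hs.le
  refine ⟨part1, ?_⟩
  have hdiv : ∀ r ∈ Ioo 0 R, HasDerivAt (fun r => g r / Real.sinh r)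
      ((deriv g r * Real.sinh r - g r * Real.cosh r) / Real.sinh r ^ 2) r := by
    intro r hr
    exact (hgd r hr).div (Real.hasDerivAt_sinh r) (Real.sinh_pos_iff.2 hr.1).ne'
  apply antitoneOn_of_deriv_nonpos (convex_Ioo _ _)
  · apply ContinuousOn.div (hg.continuousOn.mono Ioo_subset_Icc_self)
      Real.continuous_sinh.continuousOn
    intro r hr
    exact (Real.sinh_pos_iff.2 hr.1).ne'
  · rw [interior_Ioo]
    intro r hr
    exact (hdiv r hr).differentiableAt.differentiableWithinAt
  · rw [interior_Ioo]
    intro r hr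
    rw [(hdiv r hr).deriv]
    apply div_nonpos_of_nonpos_of_nonneg _ (sq_nonneg _)
    have hs : 0 < Real.sinh r := Real.sinh_pos_iff.2 hr.1
    have h1 := part1 r hr
    have : deriv g r * Real.sinh r - g r * Real.cosh r
        = (deriv g r - Real.cosh r / Real.sinh r * g r) * Real.sinh r := by
      field_simp
    rw [this]
    exact mul_nonpos_of_nonpos_of_nonneg h1 hs.le
end

section
/- Let g : [0, R] → ℝ satisfy the hypotheses of the compact monotonicity lemma (g(0)=0, g'(R)=0, g, g' positive in the interior, solving g'' + H g' + (μ + H')g = 0 with H(r) = (m-1)cot r − (k-1)tan r, R < π/4, μ ≥ 2(m+k)). Define G : [0, ∞) → ℝ by G(r) = g(r) for r < R and G(r) = g(R) for r ≥ R. Then the function r ↦ G(r)²·(−H'(r)) = (m−k)·G(r)²/sin²r + (k−1)·G(r)²/(sin²r·cos²r) is nonincreasing on (0, π/4). -/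
open Real Set

private lemma coreDeriv (a b : ℕ) (x μ : ℝ) (g g1 : ℝ → ℝ)
    (hs : 0 < Real.sin x) (hc : 0 < Real.cos x)
    (hdg : HasDerivAt g (g1 x) x)
    (hdg1 : HasDerivAt g1 (deriv (deriv g) x) x)
    (hODE : deriv (deriv g) x
        + ((1 + (a:ℝ)) * (Real.cos x / Real.sin x)
            - (b:ℝ) * (Real.sin x / Real.cos x)) * g1 x
        + (μ - (1 + (a:ℝ)) / Real.sin x ^ 2 - (b:ℝ) / Real.cos x ^ 2) * g x = 0) :
    HasDerivAt (fun r => Real.sin r^(2+a) * Real.cos r^(1+b) * g1 r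
      - Real.sin r^(1+a) * Real.cos r^b * g r * (Real.cos r^2 - Real.sin r^2))
      (Real.sin x^(2+a) * Real.cos x^(1+b) * ((2*((2+(a:ℝ))+(1+(b:ℝ))) - μ) * g x)) x := by
  have hsn := Real.hasDerivAt_sin x
  have hcn := Real.hasDerivAt_cos x
  have hp : Real.sin x ^ 2 + Real.cos x ^ 2 = 1 := Real.sin_sq_add_cos_sq x
  have H1 := (((hsn.pow (2+a)).mul (hcn.pow (1+b))).mul hdg1).sub
    ((((hsn.pow (1+a)).mul (hcn.pow b)).mul hdg).mul
      (((hcn.pow 2).sub (hsn.pow 2))))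
  refine H1.congr_deriv (Eq.symm ?_)
  simp only [Pi.mul_apply, Pi.pow_apply, Pi.sub_apply]
  push_cast
  have e1 : 2+a-1 = 1+a := by omega
  have e2 : 1+a-1 = a := by omega
  have e3 : 1+b-1 = b := by omega
  rw [e1, e2, e3]
  set s := Real.sin x
  set c := Real.cos x
  set A := g x
  set B := g1 x
  have hD' : deriv (deriv g) x = -((((1:ℝ)+(a:ℝ))*(c/s) - (b:ℝ)*(s/c))* B)
      - ((μ - (1+(a:ℝ))/s^2 - (b:ℝ)/c^2) * A) := by
    linear_combination hODE
  rcases b with _ | n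
  · have hD0 : deriv (deriv g) x * s^2 = -((1+(a:ℝ))*c*s)*B - (μ*s^2 - (1+(a:ℝ)))*A := by
      rw [hD']; push_cast; field_simp; ring
    push_cast
    simp only [pow_zero]
    linear_combination (-(s^a * c)) * hD0 + (A * ((1+(a:ℝ)) * s^a * c)) * hp
  · have hD2 : deriv (deriv g) x * (s^2*c^2)
        = -((1+(a:ℝ))*c*s*c^2 - ((n:ℝ)+1)*s*c*s^2)*B
          - (μ*s^2*c^2 - (1+(a:ℝ))*c^2 - ((n:ℝ)+1)*s^2)*A := by
      rw [hD']; push_cast; field_simp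
    push_cast
    linear_combination (-(s^a * c^n)) * hD2
      + (A * ((1+(a:ℝ)) * s^a * c^(2+n) + ((n:ℝ)+1) * s^(2+a) * c^n)) * hp

set_option maxHeartbeats 1000000 in
/-- The weight `G²·(−H')` is nonincreasing on `(0, π/4)` in the compact case. -/
theorem weight_antitone_compact (m k : ℕ) (hm : 2 ≤ m) (hk : 1 ≤ k) (hkm : k ≤ m)
    (R μ : ℝ) (hR : 0 < R) (hR4 : R < π / 4) (hμ : 2 * ((m : ℝ) + k) ≤ μ)
    (g : ℝ → ℝ) (hg : ContDiffOn ℝ 2 g (Icc 0 R))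
    (hg0 : g 0 = 0) (hgR : deriv g R = 0)
    (hgpos : ∀ r ∈ Ioc 0 R, 0 < g r)
    (hg'pos : ∀ r ∈ Ico 0 R, 0 < deriv g r)
    (hODE : ∀ r ∈ Ioo 0 R,
      deriv (deriv g) r
        + (((m : ℝ) - 1) * (Real.cos r / Real.sin r)
            - ((k : ℝ) - 1) * (Real.sin r / Real.cos r)) * deriv g r
        + (μ + deriv (fun t : ℝ => ((m : ℝ) - 1) * (Real.cos t / Real.sin t)
            - ((k : ℝ) - 1) * (Real.sin t / Real.cos t)) r) * g r = 0)
    (G : ℝ → ℝ) (hG : ∀ r : ℝ, G r = if r < R then g r else g R) :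
    AntitoneOn (fun r => ((m : ℝ) - k) * G r ^ 2 / Real.sin r ^ 2
        + ((k : ℝ) - 1) * G r ^ 2 / (Real.sin r ^ 2 * Real.cos r ^ 2))
      (Ioo 0 (π / 4)) := by
  obtain ⟨a, rfl⟩ : ∃ a, m = 2 + a := ⟨m - 2, by omega⟩
  obtain ⟨b, rfl⟩ : ∃ b, k = 1 + b := ⟨k - 1, by omega⟩
  have hπ : 0 < π := pi_pos
  have hR2 : R < π / 2 := by linarith
  -- basic positivity of sin and cos
  have hsin : ∀ r : ℝ, 0 < r → r < π/2 → 0 < Real.sin r := by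
    intro r h1 h2
    exact Real.sin_pos_of_pos_of_lt_pi h1 (by linarith)
  have hcos : ∀ r : ℝ, 0 < r → r < π/2 → 0 < Real.cos r := by
    intro r h1 h2
    exact Real.cos_pos_of_mem_Ioo ⟨by linarith, h2⟩
  set g1 : ℝ → ℝ := derivWithin g (Icc 0 R) with hg1def
  have hg1eq : ∀ x ∈ Ioo 0 R, g1 x = deriv g x := by
    intro x hx
    exact derivWithin_of_mem_nhds (Icc_mem_nhds hx.1 hx.2)
  have hg1cont : ContinuousOn g1 (Icc 0 R) :=
    hg.continuousOn_derivWithin (uniqueDiffOn_Icc hR) one_le_two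
  have hgcont : ContinuousOn g (Icc 0 R) := hg.continuousOn
  -- derivatives at interior points
  have hdg : ∀ x ∈ Ioo 0 R, HasDerivAt g (g1 x) x := by
    intro x hx
    have hmem : Icc 0 R ∈ nhds x := Icc_mem_nhds hx.1 hx.2
    have h1 : DifferentiableAt ℝ g x :=
      ((hg.differentiableOn (by norm_num)) x (Ioo_subset_Icc_self hx)).differentiableAt hmem
    rw [hg1eq x hx]
    exact h1.hasDerivAt
  have hdg1 : ∀ x ∈ Ioo 0 R, HasDerivAt g1 (deriv (deriv g) x) x := by
    intro x hx
    have h2 : ContDiffOn ℝ 1 (deriv g) (Ioo 0 R) :=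
      (hg.mono Ioo_subset_Icc_self).deriv_of_isOpen isOpen_Ioo (by norm_num)
    have h3 : DifferentiableAt ℝ (deriv g) x :=
      ((h2.differentiableOn one_ne_zero) x hx).differentiableAt (isOpen_Ioo.mem_nhds hx)
    refine h3.hasDerivAt.congr_of_eventuallyEq ?_
    exact Filter.eventuallyEq_of_mem (isOpen_Ioo.mem_nhds hx) (fun y hy => hg1eq y hy)
  -- the ODE in clean form
  have hODEx : ∀ x ∈ Ioo 0 R,
      deriv (deriv g) x
        + ((1 + (a:ℝ)) * (Real.cos x / Real.sin x) - (b:ℝ) * (Real.sin x / Real.cos x)) * g1 x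
        + (μ - (1 + (a:ℝ)) / Real.sin x ^ 2 - (b:ℝ) / Real.cos x ^ 2) * g x = 0 := by
    intro x hx
    have hs := hsin x hx.1 (by linarith [hx.2])
    have hc := hcos x hx.1 (by linarith [hx.2])
    have hV : deriv (fun t : ℝ => (((2+a:ℕ):ℝ) - 1) * (Real.cos t / Real.sin t)
          - (((1+b:ℕ):ℝ) - 1) * (Real.sin t / Real.cos t)) x
        = -((1+(a:ℝ))/Real.sin x^2) - (b:ℝ)/Real.cos x^2 := by
      have h1 : HasDerivAt (fun t : ℝ => (((2+a:ℕ):ℝ) - 1) * (Real.cos t / Real.sin t)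
            - (((1+b:ℕ):ℝ) - 1) * (Real.sin t / Real.cos t))
          ((((2+a:ℕ):ℝ)-1) * ((-Real.sin x * Real.sin x - Real.cos x * Real.cos x)/Real.sin x^2)
            - (((1+b:ℕ):ℝ)-1) * ((Real.cos x * Real.cos x - Real.sin x * (-Real.sin x))/Real.cos x^2)) x :=
        (((Real.hasDerivAt_cos x).div (Real.hasDerivAt_sin x) hs.ne').const_mul _).sub
          (((Real.hasDerivAt_sin x).div (Real.hasDerivAt_cos x) hc.ne').const_mul _)
      rw [h1.deriv]
      have hp : Real.sin x ^ 2 + Real.cos x ^ 2 = 1 := Real.sin_sq_add_cos_sq x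
      field_simp
      push_cast
      linear_combination (-((a:ℝ) * Real.cos x^2 + (b:ℝ) * Real.sin x^2 + Real.cos x^2)) * hp
    have h0 := hODE x hx
    rw [hV] at h0
    rw [hg1eq x hx]
    push_cast at h0 ⊢
    linear_combination h0
  -- the auxiliary function W and its monotonicity
  set W : ℝ → ℝ := fun r => Real.sin r^(2+a) * Real.cos r^(1+b) * g1 r
      - Real.sin r^(1+a) * Real.cos r^b * g r * (Real.cos r^2 - Real.sin r^2) with hWdef
  have hWd : ∀ x ∈ Ioo 0 R, HasDerivAt W
      (Real.sin x^(2+a) * Real.cos x^(1+b) * ((2*((2+(a:ℝ))+(1+(b:ℝ))) - μ) * g x)) x := by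
    intro x hx
    exact coreDeriv a b x μ g g1 (hsin x hx.1 (by linarith [hx.2])) (hcos x hx.1 (by linarith [hx.2]))
      (hdg x hx) (hdg1 x hx) (hODEx x hx)
  have hWanti : AntitoneOn W (Icc 0 R) := by
    apply antitoneOn_of_deriv_nonpos (convex_Icc 0 R)
    · apply ContinuousOn.sub
      · exact (((Real.continuous_sin.pow (2+a)).mul
          (Real.continuous_cos.pow (1+b))).continuousOn).mul hg1cont
      · exact (((((Real.continuous_sin.pow (1+a)).mul
          (Real.continuous_cos.pow b)).continuousOn).mul hgcont).mul
          (((Real.continuous_cos.pow 2).sub (Real.continuous_sin.pow 2)).continuousOn))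
    · rw [interior_Icc]
      exact fun x hx => (hWd x hx).differentiableAt.differentiableWithinAt
    · rw [interior_Icc]
      intro x hx
      rw [(hWd x hx).deriv]
      have hs := hsin x hx.1 (by linarith [hx.2])
      have hc := hcos x hx.1 (by linarith [hx.2])
      have hgx := hgpos x ⟨hx.1, hx.2.le⟩
      have hfac : (2*((2+(a:ℝ))+(1+(b:ℝ))) - μ) ≤ 0 := by push_cast at hμ; linarith
      have : (2*((2+(a:ℝ))+(1+(b:ℝ))) - μ) * g x ≤ 0 :=
        mul_nonpos_of_nonpos_of_nonneg hfac hgx.le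
      exact mul_nonpos_of_nonneg_of_nonpos (by positivity) this
  have hW0 : W 0 = 0 := by
    have h1 : (0:ℝ)^(2+a) = 0 := zero_pow (by omega)
    have h2 : (0:ℝ)^(1+a) = 0 := zero_pow (by omega)
    simp [hWdef, Real.sin_zero, h1, h2]
  -- the key pointwise inequality w ≤ 0
  have hwle : ∀ x ∈ Ioo 0 R,
      g1 x * (Real.sin x * Real.cos x) - g x * (Real.cos x^2 - Real.sin x^2) ≤ 0 := by
    intro x hx
    have h1 : W x ≤ W 0 := hWanti (left_mem_Icc.mpr hR.le) (Ioo_subset_Icc_self hx) hx.1.le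
    rw [hW0] at h1
    have hs := hsin x hx.1 (by linarith [hx.2])
    have hc := hcos x hx.1 (by linarith [hx.2])
    have hfac : 0 < Real.sin x^(1+a) * Real.cos x^b := by positivity
    have key : Real.sin x^(1+a) * Real.cos x^b *
        (g1 x * (Real.sin x * Real.cos x) - g x * (Real.cos x^2 - Real.sin x^2)) ≤ 0 := by
      calc Real.sin x^(1+a) * Real.cos x^b *
          (g1 x * (Real.sin x * Real.cos x) - g x * (Real.cos x^2 - Real.sin x^2)) = W x := by
            simp only [hWdef]; ring
        _ ≤ 0 := h1
    by_contra hcon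
    push_neg at hcon
    nlinarith [mul_pos hfac hcon]
  -- monotonicity of φ = g / (sin · cos) on (0, R]
  set φ : ℝ → ℝ := fun r => g r / (Real.sin r * Real.cos r) with hφdef
  have hφanti : AntitoneOn φ (Ioc 0 R) := by
    apply antitoneOn_of_deriv_nonpos (convex_Ioc 0 R)
    · apply ContinuousOn.div (hgcont.mono Ioc_subset_Icc_self)
        ((Real.continuous_sin.mul Real.continuous_cos).continuousOn)
      intro x hx
      exact (mul_pos (hsin x hx.1 (by linarith [hx.2])) (hcos x hx.1 (by linarith [hx.2]))).ne'
    · rw [interior_Ioc]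
      intro x hx
      have hs := hsin x hx.1 (by linarith [hx.2])
      have hc := hcos x hx.1 (by linarith [hx.2])
      exact (((hdg x hx).div ((Real.hasDerivAt_sin x).mul (Real.hasDerivAt_cos x))
        (mul_pos hs hc).ne')).differentiableAt.differentiableWithinAt
    · rw [interior_Ioc]
      intro x hx
      have hs := hsin x hx.1 (by linarith [hx.2])
      have hc := hcos x hx.1 (by linarith [hx.2])
      have hder := (hdg x hx).div ((Real.hasDerivAt_sin x).mul (Real.hasDerivAt_cos x))
        (mul_pos hs hc).ne'
      rw [show deriv φ x = _ from hder.deriv]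
      apply div_nonpos_of_nonpos_of_nonneg _ (sq_nonneg _)
      have h2 := hwle x hx
      simp only [Pi.mul_apply]
      nlinarith [h2]
  have hφnonneg : ∀ r ∈ Ioc 0 R, 0 ≤ φ r := by
    intro r hr
    have hs := hsin r hr.1 (by linarith [hr.2])
    have hc := hcos r hr.1 (by linarith [hr.2])
    exact div_nonneg (hgpos r hr).le (mul_pos hs hc).le
  -- cast facts
  have hMK : (0:ℝ) ≤ ((2+a:ℕ):ℝ) - ((1+b:ℕ):ℝ) := by
    have h := (Nat.cast_le (α := ℝ)).mpr hkm; linarith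
  have hK1 : (0:ℝ) ≤ ((1+b:ℕ):ℝ) - 1 := by push_cast; linarith
  set f : ℝ → ℝ := fun r => (((2+a:ℕ):ℝ) - ((1+b:ℕ):ℝ)) * G r ^ 2 / Real.sin r ^ 2
      + (((1+b:ℕ):ℝ) - 1) * G r ^ 2 / (Real.sin r ^ 2 * Real.cos r ^ 2) with hfdef
  -- piece 1 : f is antitone on Ioc 0 R
  have hpiece1 : ∀ x ∈ Ioc 0 R, ∀ y ∈ Ioc 0 R, x ≤ y → f y ≤ f x := by
    intro x hx y hy hxy
    have hGr : ∀ r ∈ Ioc 0 R, G r = g r := by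
      intro r hr
      rw [hG r]
      rcases eq_or_lt_of_le hr.2 with h | h
      · simp [h]
      · simp [h]
    have hfeq : ∀ r ∈ Ioc 0 R, f r
        = ((((2+a:ℕ):ℝ) - ((1+b:ℕ):ℝ)) * Real.cos r^2 + (((1+b:ℕ):ℝ) - 1)) * (φ r)^2 := by
      intro r hr
      have hs := hsin r hr.1 (by linarith [hr.2])
      have hc := hcos r hr.1 (by linarith [hr.2])
      simp only [hfdef, hGr r hr, hφdef]
      field_simp
    rw [hfeq x hx, hfeq y hy]
    have hcy : (0:ℝ) ≤ Real.cos y := (hcos y hy.1 (by linarith [hy.2])).le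
    have hccomp : Real.cos y ≤ Real.cos x :=
      Real.cos_le_cos_of_nonneg_of_le_pi hx.1.le (by linarith [hy.2]) hxy
    have hQ : (((2+a:ℕ):ℝ) - ((1+b:ℕ):ℝ)) * Real.cos y^2 + (((1+b:ℕ):ℝ) - 1)
        ≤ (((2+a:ℕ):ℝ) - ((1+b:ℕ):ℝ)) * Real.cos x^2 + (((1+b:ℕ):ℝ) - 1) := by
      have := pow_le_pow_left₀ hcy hccomp 2
      nlinarith
    have hφ2 : (φ y)^2 ≤ (φ x)^2 :=
      pow_le_pow_left₀ (hφnonneg y hy) (hφanti hx hy hxy) 2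
    have hQx : 0 ≤ (((2+a:ℕ):ℝ) - ((1+b:ℕ):ℝ)) * Real.cos x^2 + (((1+b:ℕ):ℝ) - 1) := by
      have := sq_nonneg (Real.cos x)
      nlinarith
    exact mul_le_mul hQ hφ2 (sq_nonneg _) hQx
  -- piece 2 : f is antitone on Ico R (π/4)
  have hpiece2 : ∀ x ∈ Ico R (π/4), ∀ y ∈ Ico R (π/4), x ≤ y → f y ≤ f x := by
    intro x hx y hy hxy
    have hx0 : 0 < x := lt_of_lt_of_le hR hx.1
    have hy0 : 0 < y := lt_of_lt_of_le hR hy.1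
    have hsx := hsin x hx0 (by linarith [hx.2])
    have hcx := hcos x hx0 (by linarith [hx.2])
    have hsy := hsin y hy0 (by linarith [hy.2])
    have hcy := hcos y hy0 (by linarith [hy.2])
    have hGx : G x = g R := by rw [hG x]; simp [not_lt.mpr hx.1]
    have hGy : G y = g R := by rw [hG y]; simp [not_lt.mpr hy.1]
    have hssq : Real.sin x ^ 2 ≤ Real.sin y ^ 2 := by
      have h1 : Real.sin x ≤ Real.sin y := by
        apply (Real.strictMonoOn_sin.monotoneOn) ⟨by linarith, by linarith [hx.2]⟩
          ⟨by linarith, by linarith [hy.2]⟩ hxy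
      exact pow_le_pow_left₀ hsx.le h1 2
    have hscsq : Real.sin x ^ 2 * Real.cos x ^ 2 ≤ Real.sin y ^ 2 * Real.cos y ^ 2 := by
      have h2x : Real.sin x * Real.cos x = Real.sin (2*x) / 2 := by
        rw [Real.sin_two_mul]; ring
      have h2y : Real.sin y * Real.cos y = Real.sin (2*y) / 2 := by
        rw [Real.sin_two_mul]; ring
      have h1 : Real.sin (2*x) ≤ Real.sin (2*y) := by
        apply (Real.strictMonoOn_sin.monotoneOn) ⟨by linarith, by linarith [hx.2]⟩
          ⟨by linarith, by linarith [hy.2]⟩ (by linarith)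
      have h2 : Real.sin x * Real.cos x ≤ Real.sin y * Real.cos y := by
        rw [h2x, h2y]; linarith
      have h3 : 0 ≤ Real.sin x * Real.cos x := (mul_pos hsx hcx).le
      calc Real.sin x ^ 2 * Real.cos x ^ 2 = (Real.sin x * Real.cos x)^2 := by ring
        _ ≤ (Real.sin y * Real.cos y)^2 := pow_le_pow_left₀ h3 h2 2
        _ = Real.sin y ^ 2 * Real.cos y ^ 2 := by ring
    simp only [hfdef, hGx, hGy]
    apply add_le_add
    · apply div_le_div_of_nonneg_left _ (by positivity) hssq
      positivity
    · apply div_le_div_of_nonneg_left _ (by positivity) hscsq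
      positivity
  -- glue
  intro x hx y hy hxy
  show f y ≤ f x
  rcases le_or_gt y R with hyR | hyR
  · exact hpiece1 x ⟨hx.1, le_trans hxy hyR⟩ y ⟨hy.1, hyR⟩ hxy
  · rcases le_or_gt x R with hxR | hxR
    · have h1 : f y ≤ f R := hpiece2 R ⟨le_refl R, hR4⟩ y ⟨hyR.le, hy.2⟩ hyR.le
      have h2 : f R ≤ f x := hpiece1 x ⟨hx.1, hxR⟩ R ⟨hR, le_refl R⟩ hxR
      linarith
    · exact hpiece2 x ⟨hxR.le, hx.2⟩ y ⟨hyR.le, hy.2⟩ hxy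
end

section
/- Let g : [0, R] → ℝ satisfy the hypotheses of the noncompact monotonicity lemma (g(0)=0, g'(R)=0, g, g' positive in the interior, solving g'' + H g' + (μ + H')g = 0 with H(r) = (m-1)coth r + (k-1)tanh r, μ > 0). Define G(r) = g(r) for r < R and G(r) = g(R) for r ≥ R. Then r ↦ (m−k)·G(r)²/sinh²r + (k−1)·G(r)²/(sinh²r·cosh²r) is nonincreasing on (0, ∞). -/
open Real Set

set_option maxHeartbeats 1000000 in
lemma key_w_nonpos (m k : ℕ) (hm : 2 ≤ m) (hk : 1 ≤ k)
    (R μ : ℝ) (hR : 0 < R) (hμ : 0 < μ)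
    (g : ℝ → ℝ) (hg : ContDiffOn ℝ 2 g (Icc 0 R))
    (hgpos : ∀ r ∈ Ioc 0 R, 0 < g r)
    (hODE : ∀ r ∈ Ioo 0 R,
      deriv (deriv g) r
        + (((m : ℝ) - 1) * (Real.cosh r / Real.sinh r)
            + ((k : ℝ) - 1) * (Real.sinh r / Real.cosh r)) * deriv g r
        + (μ + deriv (fun t : ℝ => ((m : ℝ) - 1) * (Real.cosh t / Real.sinh t)
            + ((k : ℝ) - 1) * (Real.sinh t / Real.cosh t)) r) * g r = 0) :
    ∀ x ∈ Ioo 0 R, deriv g x * Real.sinh x - g x * Real.cosh x ≤ 0 := by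
  set g₁ : ℝ → ℝ := derivWithin g (Icc 0 R) with hg₁def
  have hg₁cont : ContinuousOn g₁ (Icc 0 R) :=
    hg.continuousOn_derivWithin (uniqueDiffOn_Icc hR) (by norm_num)
  have hgc : ContinuousOn g (Icc 0 R) := hg.continuousOn
  have hg₁eq : ∀ y ∈ Ioo 0 R, g₁ y = deriv g y := by
    intro y hy
    exact derivWithin_of_mem_nhds (Icc_mem_nhds hy.1 hy.2)
  have hgIoo : ContDiffOn ℝ 2 g (Ioo 0 R) := hg.mono Ioo_subset_Icc_self
  have hdg : ContDiffOn ℝ 1 (deriv g) (Ioo 0 R) :=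
    hgIoo.deriv_of_isOpen isOpen_Ioo (by norm_num)
  -- the function φ = ρ · w₁
  set φ : ℝ → ℝ := fun r => Real.sinh r ^ (m - 1) * Real.cosh r ^ (k - 1)
      * (g₁ r * Real.sinh r - g r * Real.cosh r) with hφdef
  have hφcont : ContinuousOn φ (Icc 0 R) := by
    apply ContinuousOn.mul
    · exact ((Real.continuous_sinh.pow _).mul (Real.continuous_cosh.pow _)).continuousOn
    · exact (hg₁cont.mul Real.continuous_sinh.continuousOn).sub
        (hgc.mul Real.continuous_cosh.continuousOn)
  -- derivative of φ at interior points
  have hφderiv : ∀ x ∈ Ioo 0 R, HasDerivAt φ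
      ((((m : ℝ) - 1) * (Real.sinh x ^ (m - 1 - 1)) * Real.cosh x * Real.cosh x ^ (k - 1)
        + Real.sinh x ^ (m - 1) * (((k : ℝ) - 1) * (Real.cosh x ^ (k - 1 - 1)) * Real.sinh x))
        * (deriv g x * Real.sinh x - g x * Real.cosh x)
      + Real.sinh x ^ (m - 1) * Real.cosh x ^ (k - 1)
        * (deriv (deriv g) x * Real.sinh x + deriv g x * Real.cosh x
            - (deriv g x * Real.cosh x + g x * Real.sinh x))) x := by
    intro x hx
    have hgx : HasDerivAt g (deriv g x) x :=
      ((hgIoo.differentiableOn (by norm_num)).differentiableAt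
        (isOpen_Ioo.mem_nhds hx)).hasDerivAt
    have hg'x : HasDerivAt (deriv g) (deriv (deriv g) x) x :=
      ((hdg.differentiableOn (by norm_num)).differentiableAt (isOpen_Ioo.mem_nhds hx)).hasDerivAt
    have hsp : HasDerivAt (fun r => Real.sinh r ^ (m - 1))
        ((m - 1 : ℕ) * Real.sinh x ^ (m - 1 - 1) * Real.cosh x) x :=
      (Real.hasDerivAt_sinh x).pow (m - 1)
    have hcp : HasDerivAt (fun r => Real.cosh r ^ (k - 1))
        ((k - 1 : ℕ) * Real.cosh x ^ (k - 1 - 1) * Real.sinh x) x :=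
      (Real.hasDerivAt_cosh x).pow (k - 1)
    have hρ := hsp.mul hcp
    have hw : HasDerivAt (fun r => deriv g r * Real.sinh r - g r * Real.cosh r)
        (deriv (deriv g) x * Real.sinh x + deriv g x * Real.cosh x
          - (deriv g x * Real.cosh x + g x * Real.sinh x)) x :=
      (hg'x.mul (Real.hasDerivAt_sinh x)).sub (hgx.mul (Real.hasDerivAt_cosh x))
    have hψ := hρ.mul hw
    have hev : φ =ᶠ[nhds x] (fun r => Real.sinh r ^ (m - 1) * Real.cosh r ^ (k - 1)
        * (deriv g r * Real.sinh r - g r * Real.cosh r)) := by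
      filter_upwards [isOpen_Ioo.mem_nhds hx] with y hy
      rw [hφdef]
      simp only [hg₁eq y hy]
    have := hψ.congr_of_eventuallyEq hev
    refine this.congr_deriv ?_
    have hm1 : ((m - 1 : ℕ) : ℝ) = (m : ℝ) - 1 := by
      rw [Nat.cast_sub (by omega)]; norm_num
    have hk1 : ((k - 1 : ℕ) : ℝ) = (k : ℝ) - 1 := by
      rw [Nat.cast_sub hk]; norm_num
    rw [hm1, hk1]
    rfl
  -- the derivative of φ is nonpositive on the interior
  have hφnonpos : ∀ x ∈ Ioo 0 R, deriv φ x ≤ 0 := by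
    intro x hx
    have hs : 0 < Real.sinh x := Real.sinh_pos_iff.mpr hx.1
    have hc : 0 < Real.cosh x := Real.cosh_pos x
    rw [(hφderiv x hx).deriv]
    -- derivative of the coefficient function H
    have hHd : deriv (fun t : ℝ => ((m : ℝ) - 1) * (Real.cosh t / Real.sinh t)
        + ((k : ℝ) - 1) * (Real.sinh t / Real.cosh t)) x
        = -((m : ℝ) - 1) / Real.sinh x ^ 2 + ((k : ℝ) - 1) / Real.cosh x ^ 2 := by
      have h1 : HasDerivAt (fun t : ℝ => Real.cosh t / Real.sinh t)
          ((Real.sinh x * Real.sinh x - Real.cosh x * Real.cosh x) / Real.sinh x ^ 2) x :=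
        (Real.hasDerivAt_cosh x).div (Real.hasDerivAt_sinh x) hs.ne'
      have h2 : HasDerivAt (fun t : ℝ => Real.sinh t / Real.cosh t)
          ((Real.cosh x * Real.cosh x - Real.sinh x * Real.sinh x) / Real.cosh x ^ 2) x :=
        (Real.hasDerivAt_sinh x).div (Real.hasDerivAt_cosh x) hc.ne'
      have h3 := (h1.const_mul ((m : ℝ) - 1)).add (h2.const_mul ((k : ℝ) - 1))
      rw [HasDerivAt.deriv (f := fun t : ℝ => ((m : ℝ) - 1) * (Real.cosh t / Real.sinh t)
          + ((k : ℝ) - 1) * (Real.sinh t / Real.cosh t)) h3]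
      have hid : Real.cosh x ^ 2 - Real.sinh x ^ 2 = 1 := Real.cosh_sq_sub_sinh_sq x
      have e1 : Real.sinh x * Real.sinh x - Real.cosh x * Real.cosh x = -1 := by
        ring_nf; ring_nf at hid; linarith
      have e2 : Real.cosh x * Real.cosh x - Real.sinh x * Real.sinh x = 1 := by
        ring_nf; ring_nf at hid; linarith
      rw [e1, e2]; ring
    have hODEx := hODE x hx
    rw [hHd] at hODEx
    -- substitute g'' and compute the sign
    have hgdd : deriv (deriv g) x = -((((m : ℝ) - 1) * (Real.cosh x / Real.sinh x)
          + ((k : ℝ) - 1) * (Real.sinh x / Real.cosh x)) * deriv g x)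
        - (μ + (-((m : ℝ) - 1) / Real.sinh x ^ 2 + ((k : ℝ) - 1) / Real.cosh x ^ 2)) * g x := by
      linarith [hODEx]
    -- rewrite nat-sub powers
    have hsm : Real.sinh x ^ (m - 1 - 1) = Real.sinh x ^ (m - 1) / Real.sinh x := by
      rw [eq_div_iff hs.ne', ← pow_succ]
      congr 1; omega
    have hck : ((k : ℝ) - 1) * Real.cosh x ^ (k - 1 - 1)
        = ((k : ℝ) - 1) * Real.cosh x ^ (k - 1) / Real.cosh x := by
      rcases eq_or_lt_of_le hk with h | h
      · simp [← h]
      · have h2 : Real.cosh x ^ (k - 1 - 1) = Real.cosh x ^ (k - 1) / Real.cosh x := by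
          rw [eq_div_iff hc.ne', ← pow_succ]
          congr 1; omega
        rw [h2, mul_div_assoc]
    rw [hgdd, hsm]
    set A := Real.sinh x ^ (m - 1) with hA
    set B := Real.cosh x ^ (k - 1) with hB
    have hA0 : 0 < A := pow_pos hs _
    have hB0 : 0 < B := pow_pos hc _
    have hgx0 : 0 < g x := hgpos x ⟨hx.1, hx.2.le⟩
    have key : (((m : ℝ) - 1) * (A / Real.sinh x) * Real.cosh x * B
        + A * (((k : ℝ) - 1) * Real.cosh x ^ (k - 1 - 1) * Real.sinh x))
        * (deriv g x * Real.sinh x - g x * Real.cosh x)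
      + A * B * ((-((((m : ℝ) - 1) * (Real.cosh x / Real.sinh x)
          + ((k : ℝ) - 1) * (Real.sinh x / Real.cosh x)) * deriv g x)
        - (μ + (-((m : ℝ) - 1) / Real.sinh x ^ 2 + ((k : ℝ) - 1) / Real.cosh x ^ 2)) * g x)
          * Real.sinh x + deriv g x * Real.cosh x
            - (deriv g x * Real.cosh x + g x * Real.sinh x))
      = -(A * B * g x) * ((((m : ℝ) - 1) + ((k : ℝ) - 1) + (μ + 1)) * Real.sinh x
          + ((k : ℝ) - 1) * Real.sinh x / Real.cosh x ^ 2) := by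
      rw [hck]
      have hid : Real.cosh x ^ 2 - Real.sinh x ^ 2 = 1 := Real.cosh_sq_sub_sinh_sq x
      have hs' : Real.sinh x ≠ 0 := hs.ne'
      have hc' : Real.cosh x ≠ 0 := hc.ne'
      field_simp
      linear_combination (-(((m : ℝ) - 1) * Real.cosh x ^ 2 * g x)) * hid
    rw [key]
    have hm' : (0 : ℝ) ≤ (m : ℝ) - 1 := by
      have : (1 : ℝ) ≤ (m : ℝ) := by exact_mod_cast (by omega : 1 ≤ m)
      linarith
    have hk' : (0 : ℝ) ≤ (k : ℝ) - 1 := by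
      have : (1 : ℝ) ≤ (k : ℝ) := by exact_mod_cast hk
      linarith
    have hP : 0 ≤ (((m : ℝ) - 1) + ((k : ℝ) - 1) + (μ + 1)) * Real.sinh x
        + ((k : ℝ) - 1) * Real.sinh x / Real.cosh x ^ 2 := by
      have h1 : 0 ≤ (((m : ℝ) - 1) + ((k : ℝ) - 1) + (μ + 1)) * Real.sinh x := by
        apply mul_nonneg (by linarith) hs.le
      have h2 : 0 ≤ ((k : ℝ) - 1) * Real.sinh x / Real.cosh x ^ 2 :=
        div_nonneg (mul_nonneg hk' hs.le) (sq_nonneg _)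
      linarith
    rw [neg_mul, neg_nonpos]
    exact mul_nonneg (mul_nonneg (mul_nonneg hA0.le hB0.le) hgx0.le) hP
  -- φ is antitone on [0,R], φ(0)=0, hence φ ≤ 0
  have hφanti : AntitoneOn φ (Icc 0 R) := by
    apply antitoneOn_of_deriv_nonpos (convex_Icc 0 R) hφcont
    · intro x hx
      rw [interior_Icc] at hx
      exact ((hφderiv x hx).differentiableAt).differentiableWithinAt
    · intro x hx
      rw [interior_Icc] at hx
      exact hφnonpos x hx
  have hφ0 : φ 0 = 0 := by
    rw [hφdef]
    simp [Real.sinh_zero, zero_pow (by omega : m - 1 ≠ 0)]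
  intro x hx
  have hφx : φ x ≤ 0 := by
    have := hφanti (left_mem_Icc.mpr hR.le) ⟨hx.1.le, hx.2.le⟩ hx.1.le
    rw [hφ0] at this; exact this
  have hs : 0 < Real.sinh x := Real.sinh_pos_iff.mpr hx.1
  have hc : 0 < Real.cosh x := Real.cosh_pos x
  have hAB : 0 < Real.sinh x ^ (m - 1) * Real.cosh x ^ (k - 1) :=
    mul_pos (pow_pos hs _) (pow_pos hc _)
  rw [hφdef] at hφx
  simp only [hg₁eq x hx] at hφx
  nlinarith [hφx, hAB]

/-- The weight `G²·(−H')` is nonincreasing on `(0, ∞)` in the noncompact case. -/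
theorem weight_antitone_noncompact (m k : ℕ) (hm : 2 ≤ m) (hk : 1 ≤ k) (hkm : k ≤ m)
    (R μ : ℝ) (hR : 0 < R) (hμ : 0 < μ)
    (g : ℝ → ℝ) (hg : ContDiffOn ℝ 2 g (Icc 0 R))
    (hg0 : g 0 = 0) (hgR : deriv g R = 0)
    (hgpos : ∀ r ∈ Ioc 0 R, 0 < g r)
    (hg'pos : ∀ r ∈ Ico 0 R, 0 < deriv g r)
    (hODE : ∀ r ∈ Ioo 0 R,
      deriv (deriv g) r
        + (((m : ℝ) - 1) * (Real.cosh r / Real.sinh r)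
            + ((k : ℝ) - 1) * (Real.sinh r / Real.cosh r)) * deriv g r
        + (μ + deriv (fun t : ℝ => ((m : ℝ) - 1) * (Real.cosh t / Real.sinh t)
            + ((k : ℝ) - 1) * (Real.sinh t / Real.cosh t)) r) * g r = 0)
    (G : ℝ → ℝ) (hG : ∀ r : ℝ, G r = if r < R then g r else g R) :
    AntitoneOn (fun r => ((m : ℝ) - k) * G r ^ 2 / Real.sinh r ^ 2
        + ((k : ℝ) - 1) * G r ^ 2 / (Real.sinh r ^ 2 * Real.cosh r ^ 2))
      (Ioi 0) := by
  have hw := key_w_nonpos m k hm hk R μ hR hμ g hg hgpos hODE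
  have hgIoo : ContDiffOn ℝ 2 g (Ioo 0 R) := hg.mono Ioo_subset_Icc_self
  have hgderivat : ∀ x ∈ Ioo 0 R, HasDerivAt g (deriv g x) x := fun x hx =>
    ((hgIoo.differentiableOn (by norm_num)).differentiableAt
      (isOpen_Ioo.mem_nhds hx)).hasDerivAt
  -- g/sinh is antitone on (0,R]
  have hv1 : AntitoneOn (fun r => g r / Real.sinh r) (Ioc 0 R) := by
    apply antitoneOn_of_deriv_nonpos (convex_Ioc 0 R)
    · exact (hg.continuousOn.mono Ioc_subset_Icc_self).div
        Real.continuous_sinh.continuousOn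
        (fun y hy => (Real.sinh_pos_iff.mpr hy.1).ne')
    · intro x hx
      rw [interior_Ioc] at hx
      have hs : 0 < Real.sinh x := Real.sinh_pos_iff.mpr hx.1
      exact (((hgderivat x hx).div (Real.hasDerivAt_sinh x) hs.ne').differentiableAt
        ).differentiableWithinAt
    · intro x hx
      rw [interior_Ioc] at hx
      have hs : 0 < Real.sinh x := Real.sinh_pos_iff.mpr hx.1
      rw [HasDerivAt.deriv (f := fun r => g r / Real.sinh r)
        ((hgderivat x hx).div (Real.hasDerivAt_sinh x) hs.ne')]
      exact div_nonpos_iff.mpr (Or.inr ⟨hw x hx, sq_nonneg _⟩)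
  -- g/(sinh·cosh) is antitone on (0,R]
  have hv2 : AntitoneOn (fun r => g r / (Real.sinh r * Real.cosh r)) (Ioc 0 R) := by
    apply antitoneOn_of_deriv_nonpos (convex_Ioc 0 R)
    · exact (hg.continuousOn.mono Ioc_subset_Icc_self).div
        (Real.continuous_sinh.mul Real.continuous_cosh).continuousOn
        (fun y hy => (mul_pos (Real.sinh_pos_iff.mpr hy.1) (Real.cosh_pos y)).ne')
    · intro x hx
      rw [interior_Ioc] at hx
      have hs : 0 < Real.sinh x := Real.sinh_pos_iff.mpr hx.1
      have hc : 0 < Real.cosh x := Real.cosh_pos x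
      exact ((hgderivat x hx).div
        ((Real.hasDerivAt_sinh x).mul (Real.hasDerivAt_cosh x))
        (mul_pos hs hc).ne').differentiableAt.differentiableWithinAt
    · intro x hx
      rw [interior_Ioc] at hx
      have hs : 0 < Real.sinh x := Real.sinh_pos_iff.mpr hx.1
      have hc : 0 < Real.cosh x := Real.cosh_pos x
      rw [HasDerivAt.deriv (f := fun r => g r / (Real.sinh r * Real.cosh r)) ((hgderivat x hx).div
        ((Real.hasDerivAt_sinh x).mul (Real.hasDerivAt_cosh x))
        (mul_pos hs hc).ne')]
      apply div_nonpos_iff.mpr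
      right
      constructor
      · have hgx0 : 0 < g x := hgpos x ⟨hx.1, hx.2.le⟩
        have h1 : Real.cosh x * (deriv g x * Real.sinh x - g x * Real.cosh x) ≤ 0 :=
          mul_nonpos_of_nonneg_of_nonpos hc.le (hw x hx)
        have h2 : 0 ≤ g x * (Real.sinh x * Real.sinh x) :=
          mul_nonneg hgx0.le (mul_nonneg hs.le hs.le)
        have heq : deriv g x * (Real.sinh x * Real.cosh x)
            - g x * (Real.cosh x * Real.cosh x + Real.sinh x * Real.sinh x)
            = Real.cosh x * (deriv g x * Real.sinh x - g x * Real.cosh x)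
              - g x * (Real.sinh x * Real.sinh x) := by ring
        rw [heq]; linarith
      · exact sq_nonneg _
  -- facts about G
  have hGg : ∀ r ∈ Ioc 0 R, G r = g r := by
    intro r hr
    rw [hG]
    split_ifs with h
    · rfl
    · rw [le_antisymm hr.2 (not_lt.1 h)]
  have hgR0 : 0 < g R := hgpos R ⟨hR, le_rfl⟩
  have hGconst : ∀ r, R ≤ r → G r = g R := by
    intro r hr
    rw [hG, if_neg (not_lt.2 hr)]
  have hGnn : ∀ r, 0 < r → 0 ≤ G r := by
    intro r hr
    rw [hG]
    split_ifs with h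
    · exact (hgpos r ⟨hr, h.le⟩).le
    · exact hgR0.le
  intro a ha b hb hab
  simp only [mem_Ioi] at ha hb
  have hsa : 0 < Real.sinh a := Real.sinh_pos_iff.mpr ha
  have hsb : 0 < Real.sinh b := Real.sinh_pos_iff.mpr hb
  have hca : 0 < Real.cosh a := Real.cosh_pos a
  have hcb : 0 < Real.cosh b := Real.cosh_pos b
  -- two monotonicity facts
  have key₁ : G b / Real.sinh b ≤ G a / Real.sinh a := by
    rcases le_or_gt b R with hbR | hRb
    · rw [hGg a ⟨ha, hab.trans hbR⟩, hGg b ⟨hb, hbR⟩]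
      exact hv1 ⟨ha, hab.trans hbR⟩ ⟨hb, hbR⟩ hab
    · rw [hGconst b hRb.le]
      rcases le_or_gt a R with haR | hRa
      · rw [hGg a ⟨ha, haR⟩]
        calc g R / Real.sinh b ≤ g R / Real.sinh R := by
              apply div_le_div_of_nonneg_left hgR0.le (Real.sinh_pos_iff.mpr hR)
              exact Real.sinh_le_sinh.mpr hRb.le
          _ ≤ g a / Real.sinh a := hv1 ⟨ha, haR⟩ ⟨hR, le_rfl⟩ haR
      · rw [hGconst a hRa.le]
        apply div_le_div_of_nonneg_left hgR0.le hsa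
        exact Real.sinh_le_sinh.mpr hab
  have hscmono : ∀ x y : ℝ, 0 < x → x ≤ y →
      Real.sinh x * Real.cosh x ≤ Real.sinh y * Real.cosh y := by
    intro x y hx hxy
    apply mul_le_mul (Real.sinh_le_sinh.mpr hxy)
      (Real.cosh_le_cosh.mpr (by rw [abs_of_nonneg hx.le, abs_of_nonneg (hx.le.trans hxy)]; exact hxy))
      (Real.cosh_pos x).le (Real.sinh_pos_iff.mpr (hx.trans_le hxy)).le
  have key₂ : G b / (Real.sinh b * Real.cosh b) ≤ G a / (Real.sinh a * Real.cosh a) := by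
    rcases le_or_gt b R with hbR | hRb
    · rw [hGg a ⟨ha, hab.trans hbR⟩, hGg b ⟨hb, hbR⟩]
      exact hv2 ⟨ha, hab.trans hbR⟩ ⟨hb, hbR⟩ hab
    · rw [hGconst b hRb.le]
      rcases le_or_gt a R with haR | hRa
      · rw [hGg a ⟨ha, haR⟩]
        calc g R / (Real.sinh b * Real.cosh b)
            ≤ g R / (Real.sinh R * Real.cosh R) := by
              apply div_le_div_of_nonneg_left hgR0.le
                (mul_pos (Real.sinh_pos_iff.mpr hR) (Real.cosh_pos R))
              exact hscmono R b hR hRb.le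
          _ ≤ g a / (Real.sinh a * Real.cosh a) := hv2 ⟨ha, haR⟩ ⟨hR, le_rfl⟩ haR
      · rw [hGconst a hRa.le]
        apply div_le_div_of_nonneg_left hgR0.le (mul_pos hsa hca)
        exact hscmono a b ha hab
  -- assemble
  have hmk : (0 : ℝ) ≤ (m : ℝ) - k := by
    have : (k : ℝ) ≤ (m : ℝ) := by exact_mod_cast hkm
    linarith
  have hk1 : (0 : ℝ) ≤ (k : ℝ) - 1 := by
    have : (1 : ℝ) ≤ (k : ℝ) := by exact_mod_cast hk
    linarith
  have e : ∀ r : ℝ, ((m : ℝ) - k) * G r ^ 2 / Real.sinh r ^ 2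
      + ((k : ℝ) - 1) * G r ^ 2 / (Real.sinh r ^ 2 * Real.cosh r ^ 2)
      = ((m : ℝ) - k) * (G r / Real.sinh r) ^ 2
        + ((k : ℝ) - 1) * (G r / (Real.sinh r * Real.cosh r)) ^ 2 := by
    intro r
    rw [div_pow, div_pow, mul_pow, mul_div_assoc, mul_div_assoc]
  simp only [e]
  have hb1 : 0 ≤ G b / Real.sinh b := div_nonneg (hGnn b hb) hsb.le
  have hb2 : 0 ≤ G b / (Real.sinh b * Real.cosh b) :=
    div_nonneg (hGnn b hb) (mul_pos hsb hcb).le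
  have p1 : (G b / Real.sinh b) ^ 2 ≤ (G a / Real.sinh a) ^ 2 :=
    pow_le_pow_left₀ hb1 key₁ 2
  have p2 : (G b / (Real.sinh b * Real.cosh b)) ^ 2
      ≤ (G a / (Real.sinh a * Real.cosh a)) ^ 2 :=
    pow_le_pow_left₀ hb2 key₂ 2
  have := add_le_add (mul_le_mul_of_nonneg_left p1 hmk) (mul_le_mul_of_nonneg_left p2 hk1)
  exact this
end
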